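/- Let S be a countable commutative semigroup such that dS is piecewise syndetic in S for all d ∈ ℕ. If M ⊆ S is quasi-central, then for every l ∈ ℕ the set {(a,b) ∈ S × S : a + i·b ∈ M for all i = 0,1,...,l} is quasi-central in S × S. -/

import Mathlib

/-- `Thick B`: every finite set has a translate contained in `B`. -/
def Thick {S : Type*} [AddCommSemigroup S] (B : Set S) : Prop :=
  ∀ F : Finset S, ∃ x : S, ∀ f ∈ F, f + x ∈ B

/-- `PiecewiseSyndetic A`: some finite union of translates `-t+A` is thick. -/
def PiecewiseSyndetic {S : Type*} [AddCommSemigroup S] (A : Set S) : Prop :=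
  ∃ F : Finset S, Thick {s : S | ∃ t ∈ F, t + s ∈ A}

/-- `itAdd n t` is the `(n+1)`-fold sum `t + t + ⋯ + t`. -/
def itAdd {S : Type*} [AddCommSemigroup S] : ℕ → S → S
  | 0, t => t
  | n + 1, t => itAdd n t + t

/-- `QuasiCentral A`: there is a decreasing sequence of piecewise syndetic subsets
of `A` such that each member of each set admits a later set inside its translate. -/
def QuasiCentral {S : Type*} [AddCommSemigroup S] (A : Set S) : Prop :=
  ∃ C : ℕ → Set S, (∀ n, C n ⊆ A) ∧ (∀ n, C (n + 1) ⊆ C n) ∧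
    (∀ n, PiecewiseSyndetic (C n)) ∧
    ∀ n, ∀ x ∈ C n, ∃ m, C m ⊆ {s : S | x + s ∈ C n}


open Filter Set Function

attribute [local instance] Ultrafilter.add Ultrafilter.addSemigroup

namespace QC13

/-! ### itAdd arithmetic -/

section ItAddLemmas
variable {S : Type*} [AddCommSemigroup S]

lemma itAdd_succ (n : ℕ) (e : S) : itAdd (n+1) e = itAdd n e + e := rfl

lemma itAdd_add_itAdd (m n : ℕ) (e : S) :
    itAdd m e + itAdd n e = itAdd (m + n + 1) e := by
  induction n with
  | zero => rfl
  | succ n ih =>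
      rw [itAdd_succ, ← add_assoc, ih, ← itAdd_succ]
      congr 1

lemma itAdd_itAdd (i j : ℕ) (e : S) :
    itAdd i (itAdd j e) = itAdd (i * (j + 1) + j) e := by
  induction i with
  | zero => simp [itAdd]
  | succ i ih =>
      rw [itAdd_succ, ih, itAdd_add_itAdd]
      congr 1
      ring

lemma itAdd_dist (n : ℕ) (a b : S) :
    itAdd n (a + b) = itAdd n a + itAdd n b := by
  induction n with
  | zero => rfl
  | succ n ih => rw [itAdd_succ, itAdd_succ, itAdd_succ, ih, add_add_add_comm]

end ItAddLemmas

/-- the `i`-th term of the arithmetic configuration: `apTerm 0 (a,b) = a`,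
`apTerm (i+1) (a,b) = a + (i+1)·b`. -/
def apTerm {S : Type*} [AddCommSemigroup S] : ℕ → S × S → S
  | 0, p => p.1
  | i + 1, p => p.1 + itAdd i p.2

section ApTerm
variable {S : Type*} [AddCommSemigroup S]

lemma apTerm_add (i : ℕ) (p q : S × S) :
    apTerm i (p + q) = apTerm i p + apTerm i q := by
  cases i with
  | zero => rfl
  | succ i =>
      show (p.1 + q.1) + itAdd i (p.2 + q.2) = (p.1 + itAdd i p.2) + (q.1 + itAdd i q.2)
      rw [itAdd_dist, add_add_add_comm]

end ApTerm

/-! ### Ultrafilter semigroup basics -/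

section UFBasic
variable {S S' : Type*} [AddSemigroup S] [AddSemigroup S']

lemma umem_mono {f : Ultrafilter S} {s t : Set S} (h : s ∈ f) (hsub : s ⊆ t) : t ∈ f :=
  Ultrafilter.mem_coe.1 (Filter.mem_of_superset (Ultrafilter.mem_coe.2 h) hsub)

lemma uf_mem_add {A : Set S} {p q : Ultrafilter S} :
    A ∈ p + q ↔ {x | {y | x + y ∈ A} ∈ q} ∈ p := by
  have h := Ultrafilter.eventually_add p q (· ∈ A)
  simpa only [Filter.eventually_iff, Ultrafilter.mem_coe, Set.mem_setOf_eq, Set.setOf_mem_eq] using h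

lemma uf_pure_add {a : S} {q : Ultrafilter S} {A : Set S} :
    A ∈ (pure a : Ultrafilter S) + q ↔ {y | a + y ∈ A} ∈ q := by
  rw [uf_mem_add]
  exact Ultrafilter.mem_pure

lemma continuous_pure_add (a : S) :
    Continuous (fun q : Ultrafilter S => (pure a : Ultrafilter S) + q) := by
  refine ultrafilterBasis_is_basis.continuous_iff.2 ?_
  rintro _ ⟨s, rfl⟩
  have he : (fun q : Ultrafilter S => (pure a : Ultrafilter S) + q) ⁻¹' {u | s ∈ u}
      = {q : Ultrafilter S | {y | a + y ∈ s} ∈ q} := by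
    ext q; exact uf_pure_add
  rw [he]
  exact ultrafilter_isOpen_basic _

lemma add_mem_of_closed {C : Set (Ultrafilter S)} (hC : IsClosed C) (p q : Ultrafilter S)
    (h : ∀ x : S, (pure x : Ultrafilter S) + q ∈ C) : p + q ∈ C := by
  by_contra hn
  obtain ⟨t, ⟨A, rfl⟩, hmem, hsub⟩ :=
    ultrafilterBasis_is_basis.exists_subset_of_mem_open hn hC.isOpen_compl
  have h1 : {x | {y | x + y ∈ A} ∈ q} ∈ p := uf_mem_add.1 hmem
  obtain ⟨x, hx⟩ := Ultrafilter.nonempty_of_mem h1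
  exact hsub (uf_pure_add.2 hx) (h x)

lemma uf_map_add (f : S → S') (hf : ∀ a b, f (a + b) = f a + f b) (p q : Ultrafilter S) :
    Ultrafilter.map f (p + q) = Ultrafilter.map f p + Ultrafilter.map f q := by
  ext A
  rw [Ultrafilter.mem_map, uf_mem_add, uf_mem_add]
  refine Iff.of_eq (congrArg (· ∈ p) ?_)
  ext x
  simp only [Set.mem_setOf_eq, Set.mem_preimage, Ultrafilter.mem_map]
  refine Iff.of_eq (congrArg (· ∈ q) ?_)
  ext y
  simp [hf]

lemma continuous_uf_map {T T' : Type*} (f : T → T') :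
    Continuous (Ultrafilter.map f : Ultrafilter T → Ultrafilter T') := by
  refine ultrafilterBasis_is_basis.continuous_iff.2 ?_
  rintro _ ⟨s, rfl⟩
  have he : (Ultrafilter.map f : Ultrafilter T → Ultrafilter T') ⁻¹' {u | s ∈ u}
      = {q : Ultrafilter T | f ⁻¹' s ∈ q} := by
    ext q; exact Ultrafilter.mem_map
  rw [he]
  exact ultrafilter_isOpen_basic _

end UFBasic

/-! ### Ellis theory in a compact right-topological semigroup -/

section Ellis
variable {X : Type*} [AddSemigroup X] [TopologicalSpace X]

/-- `L` is a left ideal of the subsemigroup `E`. -/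
def IsLI (E L : Set X) : Prop := L.Nonempty ∧ L ⊆ E ∧ ∀ x ∈ E, ∀ y ∈ L, x + y ∈ L

/-- `L` is a minimal closed left ideal of the subsemigroup `E`. -/
def IsMinLI (E L : Set X) : Prop :=
  IsLI E L ∧ IsClosed L ∧ ∀ L', IsLI E L' → IsClosed L' → L' ⊆ L → L' = L

variable [CompactSpace X] [T2Space X]

lemma exists_minLI_subset {E L₀ : Set X} (h0 : IsLI E L₀) (hcl : IsClosed L₀) :
    ∃ L, IsMinLI E L ∧ L ⊆ L₀ := by
  have hzorn : ∀ c ⊆ {L : Set X | IsLI E L ∧ IsClosed L}, IsChain (· ⊆ ·) c →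
      c.Nonempty → ∃ lb ∈ {L : Set X | IsLI E L ∧ IsClosed L}, ∀ s ∈ c, lb ⊆ s := by
    intro c hcs hchain hcne
    haveI := hcne.coe_sort
    have hne : (⋂₀ c).Nonempty := by
      have := IsCompact.nonempty_iInter_of_directed_nonempty_isCompact_isClosed
        ((↑) : c → Set X) (DirectedOn.directed_val (IsChain.directedOn hchain.symm))
        (fun L => (hcs L.prop).1.1) (fun L => (hcs L.prop).2.isCompact)
        (fun L => (hcs L.prop).2)
      rwa [Set.sInter_eq_iInter]
    refine ⟨⋂₀ c, ⟨⟨hne, ?_, ?_⟩, isClosed_sInter fun t ht => (hcs ht).2⟩,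
      fun s hs => sInter_subset_of_mem hs⟩
    · obtain ⟨t, ht⟩ := hcne
      exact (sInter_subset_of_mem ht).trans (hcs ht).1.2.1
    · intro x hx y hy
      exact mem_sInter.2 fun t ht => (hcs ht).1.2.2 x hx y (mem_sInter.1 hy t ht)
  obtain ⟨m, hm0, hmin⟩ :=
    zorn_superset_nonempty {L | IsLI E L ∧ IsClosed L} hzorn L₀ ⟨h0, hcl⟩
  exact ⟨m, ⟨hmin.prop.1, hmin.prop.2,
    fun L' h1 h2 h3 => subset_antisymm h3 (hmin.2 ⟨h1, h2⟩ h3)⟩, hm0⟩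

lemma minLI_eq_image (hc : ∀ r : X, Continuous (· + r : X → X)) {E L : Set X} (hE : ∀ x ∈ E, ∀ y ∈ E, x + y ∈ E)
    (hEc : IsClosed E) (hL : IsMinLI E L) {z : X} (hz : z ∈ L) :
    (· + z) '' E = L := by
  have hzE : z ∈ E := hL.1.2.1 hz
  have hLI : IsLI E ((· + z) '' E) :=
    ⟨⟨z + z, ⟨z, hzE, rfl⟩⟩, (by rintro _ ⟨x, hx, rfl⟩; exact hE x hx z hzE),
      (by rintro x hx _ ⟨y, hy, rfl⟩; exact ⟨x + y, hE x hx y hy, add_assoc x y z⟩)⟩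
  have hclosed : IsClosed ((· + z) '' E) := (hEc.isCompact.image (hc z)).isClosed
  have hsub : (· + z) '' E ⊆ L := by
    rintro _ ⟨x, hx, rfl⟩; exact hL.1.2.2 x hx z hz
  exact hL.2.2 _ hLI hclosed hsub

lemma minLI_min (hc : ∀ r : X, Continuous (· + r : X → X)) {E L L' : Set X} (hE : ∀ x ∈ E, ∀ y ∈ E, x + y ∈ E) (hEc : IsClosed E)
    (hL : IsMinLI E L) (h' : IsLI E L') (hsub : L' ⊆ L) : L' = L := by
  obtain ⟨z, hz⟩ := h'.1
  have him : (· + z) '' E = L := minLI_eq_image hc hE hEc hL (hsub hz)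
  refine subset_antisymm hsub ?_
  rw [← him]
  rintro _ ⟨x, hx, rfl⟩
  exact h'.2.2 x hx z hz

lemma exists_idem_of_subsemigroup (hc : ∀ r : X, Continuous (· + r : X → X)) {E : Set X} (hEne : E.Nonempty) (hEc : IsClosed E)
    (hE : ∀ x ∈ E, ∀ y ∈ E, x + y ∈ E) : ∃ f ∈ E, f + f = f :=
  exists_idempotent_in_compact_add_subsemigroup hc E hEne hEc.isCompact hE

lemma minLI_exists_idem (hc : ∀ r : X, Continuous (· + r : X → X)) {E L : Set X} (hL : IsMinLI E L) : ∃ f ∈ L, f + f = f :=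
  exists_idem_of_subsemigroup hc hL.1.1 hL.2.1
    (fun x hx y hy => hL.1.2.2 x (hL.1.2.1 hx) y hy)

lemma minLI_subset_ideal (hc : ∀ r : X, Continuous (· + r : X → X)) {E L I : Set X} (hE : ∀ x ∈ E, ∀ y ∈ E, x + y ∈ E)
    (hEc : IsClosed E) (hL : IsMinLI E L) (hIsub : I ⊆ E)
    (hIl : ∀ x ∈ E, ∀ y ∈ I, x + y ∈ I) (hIr : ∀ y ∈ I, ∀ x ∈ E, y + x ∈ I)
    (hIne : I.Nonempty) : L ⊆ I := by
  obtain ⟨z, hz⟩ := hIne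
  obtain ⟨y, hy⟩ := hL.1.1
  have hyE : y ∈ E := hL.1.2.1 hy
  have h1 : y + z + y ∈ I := hIr _ (hIl _ hyE _ hz) _ hyE
  have h2 : y + z + y ∈ L := hL.1.2.2 _ (hE _ hyE _ (hIsub hz)) _ hy
  have hLI : IsLI E (L ∩ I) :=
    ⟨⟨_, h2, h1⟩, inter_subset_left.trans hL.1.2.1,
      fun x hx w hw => ⟨hL.1.2.2 x hx w hw.1, hIl x hx w hw.2⟩⟩
  have := minLI_min hc hE hEc hL hLI inter_subset_left
  intro w hw
  rw [← this] at hw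
  exact hw.2

lemma mem_minLI_of_global (hc : ∀ r : X, Continuous (· + r : X → X)) {E : Set X} (hE : ∀ x ∈ E, ∀ y ∈ E, x + y ∈ E)
    (hEc : IsClosed E) {LY : Set X} (hLY : IsMinLI univ LY) {x : X}
    (hxL : x ∈ LY) (hxE : x ∈ E) : ∃ LE, IsMinLI E LE ∧ x ∈ LE := by
  have hLI : IsLI E ((· + x) '' E) :=
    ⟨⟨x + x, ⟨x, hxE, rfl⟩⟩, (by rintro _ ⟨e, he, rfl⟩; exact hE e he x hxE),
      (by rintro w hw _ ⟨e, he, rfl⟩; exact ⟨w + e, hE w hw e he, add_assoc w e x⟩)⟩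
  obtain ⟨LE, hLE, hLEsub⟩ := exists_minLI_subset hLI (hEc.isCompact.image (hc x)).isClosed
  have hsubLY : LE ⊆ LY := hLEsub.trans (by
    rintro _ ⟨e, he, rfl⟩; exact hLY.1.2.2 e (mem_univ e) x hxL)
  obtain ⟨f, hfLE, hff⟩ := minLI_exists_idem hc hLE
  have him : (· + f) '' univ = LY :=
    minLI_eq_image hc (fun _ _ _ _ => mem_univ _) isClosed_univ hLY (hsubLY hfLE)
  have hx' : x ∈ (· + f) '' univ := by rw [him]; exact hxL
  obtain ⟨s, -, hs⟩ := hx'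
  have hxf : x + f = x := by rw [← hs, add_assoc, hff]
  exact ⟨LE, hLE, hxf ▸ hLE.1.2.2 x hxE f hfLE⟩

lemma isMinLI_univ_of_homog {L : Set X} (hE : ∀ x ∈ univ, ∀ y ∈ (univ : Set X), x + y ∈ univ)
    (hLI : IsLI univ L) (hcl : IsClosed L)
    (h : ∀ z ∈ L, ∀ w ∈ L, ∃ r, r + z = w) : IsMinLI univ L := by
  refine ⟨hLI, hcl, fun L' h1 h2 h3 => subset_antisymm h3 ?_⟩
  obtain ⟨z, hz⟩ := h1.1
  intro w hw
  obtain ⟨r, hr⟩ := h z (h3 hz) w hw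
  rw [← hr]
  exact h1.2.2 r (mem_univ r) z hz

lemma isMinLI_pi (hc : ∀ r : X, Continuous (· + r : X → X)) {ι : Type*} {L : Set X} (hL : IsMinLI univ L) :
    IsMinLI (univ : Set (ι → X)) {y : ι → X | ∀ i, y i ∈ L} := by
  obtain ⟨z₀, hz₀⟩ := hL.1.1
  refine isMinLI_univ_of_homog (fun _ _ _ _ => mem_univ _) ?_ ?_ ?_
  · exact ⟨⟨fun _ => z₀, fun _ => hz₀⟩, subset_univ _,
      fun x _ y hy i => hL.1.2.2 (x i) (mem_univ _) (y i) (hy i)⟩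
  · have : {y : ι → X | ∀ i, y i ∈ L} = ⋂ i, (fun y : ι → X => y i) ⁻¹' L := by
      ext y; simp
    rw [this]
    exact isClosed_iInter fun i => hL.2.1.preimage (continuous_apply i)
  · intro z hz w hw
    have : ∀ i, ∃ r, r + z i = w i := by
      intro i
      have him : (· + z i) '' univ = L :=
        minLI_eq_image hc (fun _ _ _ _ => mem_univ _) isClosed_univ hL (hz i)
      have h' : w i ∈ (· + z i) '' univ := by rw [him]; exact hw i
      obtain ⟨r, -, hr⟩ := h'
      exact ⟨r, hr⟩
    choose r hr using this
    exact ⟨r, funext hr⟩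

end Ellis

/-! ### the smallest ideal -/

section BigK
variable (X : Type*) [AddSemigroup X] [TopologicalSpace X]

/-- union of all minimal left ideals. -/
def bigK : Set X := {x | ∃ L, IsMinLI (univ : Set X) L ∧ x ∈ L}

variable {X}
variable [CompactSpace X] [T2Space X]

lemma bigK_nonempty [Nonempty X] : (bigK X).Nonempty := by
  obtain ⟨L, hL, -⟩ := exists_minLI_subset
    (E := (univ : Set X)) (L₀ := univ)
    ⟨univ_nonempty, subset_rfl, fun _ _ _ _ => mem_univ _⟩ isClosed_univ
  obtain ⟨x, hx⟩ := hL.1.1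
  exact ⟨x, L, hL, hx⟩

lemma bigK_add_left {x : X} (hx : x ∈ bigK X) (p : X) : p + x ∈ bigK X := by
  obtain ⟨L, hL, hxL⟩ := hx
  exact ⟨L, hL, hL.1.2.2 p (mem_univ p) x hxL⟩

lemma bigK_add_right (hc : ∀ r : X, Continuous (· + r : X → X))
    {x : X} (hx : x ∈ bigK X) (p : X) : x + p ∈ bigK X := by
  obtain ⟨L, hL, hxL⟩ := hx
  refine ⟨(· + p) '' L, ?_, ⟨x, hxL, rfl⟩⟩
  refine isMinLI_univ_of_homog (fun _ _ _ _ => mem_univ _)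
    ⟨⟨x + p, ⟨x, hxL, rfl⟩⟩, subset_univ _, ?_⟩
    ((hL.2.1.isCompact.image (hc p)).isClosed) ?_
  · rintro w _ _ ⟨y, hy, rfl⟩
    exact ⟨w + y, hL.1.2.2 w (mem_univ w) y hy, add_assoc w y p⟩
  · rintro _ ⟨a, ha, rfl⟩ _ ⟨b, hb, rfl⟩
    have him : (· + a) '' univ = L :=
      minLI_eq_image hc (fun _ _ _ _ => mem_univ _) isClosed_univ hL ha
    have h' : b ∈ (· + a) '' univ := by rw [him]; exact hb
    obtain ⟨r, -, hr⟩ := h'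
    refine ⟨r, ?_⟩
    show r + (a + p) = b + p
    rw [← add_assoc, show r + a = b from hr]

end BigK

/-! ### closure of bigK in an ultrafilter semigroup is a two-sided ideal -/

section ClK
variable {S : Type*} [AddSemigroup S]

lemma clK_add_right {p : Ultrafilter S} (hp : p ∈ closure (bigK (Ultrafilter S)))
    (q : Ultrafilter S) : p + q ∈ closure (bigK (Ultrafilter S)) := by
  have h1 : p + q ∈ (· + q) '' closure (bigK (Ultrafilter S)) := ⟨p, hp, rfl⟩
  have h2 : (· + q) '' closure (bigK (Ultrafilter S))
      ⊆ closure ((· + q) '' bigK (Ultrafilter S)) :=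
    image_closure_subset_closure_image (Ultrafilter.continuous_add_left q)
  refine closure_mono ?_ (h2 h1)
  rintro _ ⟨x, hx, rfl⟩
  exact bigK_add_right (fun r => Ultrafilter.continuous_add_left r) hx q

lemma clK_add_left {q : Ultrafilter S} (hq : q ∈ closure (bigK (Ultrafilter S)))
    (p : Ultrafilter S) : p + q ∈ closure (bigK (Ultrafilter S)) := by
  refine add_mem_of_closed isClosed_closure p q fun x => ?_
  have h1 : (pure x : Ultrafilter S) + q
      ∈ (fun r => (pure x : Ultrafilter S) + r) '' closure (bigK (Ultrafilter S)) := ⟨q, hq, rfl⟩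
  have h2 : (fun r => (pure x : Ultrafilter S) + r) '' closure (bigK (Ultrafilter S))
      ⊆ closure ((fun r => (pure x : Ultrafilter S) + r) '' bigK (Ultrafilter S)) :=
    image_closure_subset_closure_image (continuous_pure_add x)
  refine closure_mono ?_ (h2 h1)
  rintro _ ⟨y, hy, rfl⟩
  exact bigK_add_left hy _

end ClK

/-! ### piecewise syndetic vs the smallest ideal -/

section PWS
variable {S : Type*} [AddCommSemigroup S]

lemma pws_of_memK {A : Set S} {p : Ultrafilter S}
    (hp : p ∈ bigK (Ultrafilter S)) (hA : A ∈ p) : PiecewiseSyndetic A := by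
  classical
  obtain ⟨L, hL, hpL⟩ := hp
  have hcover : L ⊆ ⋃ x : S, {q : Ultrafilter S | {y | x + y ∈ A} ∈ q} := by
    intro q hq
    have him : (· + q) '' univ = L :=
      minLI_eq_image (fun r => Ultrafilter.continuous_add_left r)
        (fun _ _ _ _ => mem_univ _) isClosed_univ hL hq
    have hp' : p ∈ (· + q) '' univ := by rw [him]; exact hpL
    obtain ⟨r, -, hr⟩ := hp'
    have hA' : A ∈ r + q := by rw [show r + q = p from hr]; exact hA
    obtain ⟨x, hx⟩ := Ultrafilter.nonempty_of_mem (uf_mem_add.1 hA')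
    exact mem_iUnion.2 ⟨x, hx⟩
  obtain ⟨H, hH⟩ := hL.2.1.isCompact.elim_finite_subcover
    (fun x : S => {q : Ultrafilter S | {y | x + y ∈ A} ∈ q})
    (fun x => ultrafilter_isOpen_basic _) hcover
  refine ⟨H, ?_⟩
  intro F
  have hkey : ∀ s : S, {y | s + y ∈ {s' : S | ∃ t ∈ H, t + s' ∈ A}} ∈ p := by
    intro s
    have hsq : (pure s : Ultrafilter S) + p ∈ L := hL.1.2.2 _ (mem_univ _) _ hpL
    obtain ⟨t, htH, ht⟩ := mem_iUnion₂.1 (hH hsq)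
    have h2 : {z | t + (s + z) ∈ A} ∈ p := by
      have := uf_pure_add.1 ht
      simpa using this
    exact umem_mono h2 (fun z hz => ⟨t, htH, hz⟩)
  have hint : (⋂ f ∈ F, {y | f + y ∈ {s' : S | ∃ t ∈ H, t + s' ∈ A}}) ∈ p :=
    Ultrafilter.mem_coe.1 ((Filter.biInter_finset_mem F).2 fun f _ =>
      Ultrafilter.mem_coe.2 (hkey f))
  obtain ⟨x, hx⟩ := Ultrafilter.nonempty_of_mem hint
  exact ⟨x, fun f hf => mem_iInter₂.1 hx f hf⟩

lemma thick_ultrafilter {T : Set S} (hT : Thick T) :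
    ∃ u : Ultrafilter S, ∀ s : S, {y | s + y ∈ T} ∈ u := by
  classical
  have hfip : ∀ G : Finset (Set S), ↑G ⊆ (range fun s : S => {y | s + y ∈ T}) →
      (⋂₀ (↑G : Set (Set S))).Nonempty := by
    intro G hG
    have hch : ∀ t ∈ G, ∃ s : S, {y | s + y ∈ T} = t := fun t ht => hG ht
    choose g hg using hch
    have hx' := hT (G.attach.image (fun t : {u : Set S // u ∈ G} => g t.1 t.2))
    obtain ⟨x, hx⟩ := hx'
    refine ⟨x, ?_⟩
    intro t ht
    have hgt : g t ht + x ∈ T :=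
      hx _ (Finset.mem_image.2 ⟨⟨t, ht⟩, Finset.mem_attach _ _, rfl⟩)
    have := hg t ht
    rw [← this]
    exact hgt
  obtain ⟨F, hF⟩ := Ultrafilter.exists_ultrafilter_of_finite_inter_nonempty
    (range fun s : S => {y | s + y ∈ T}) hfip
  exact ⟨F, fun s => hF (mem_range_self s)⟩

lemma exists_memK_of_pws {A : Set S} (hA : PiecewiseSyndetic A) :
    ∃ p ∈ bigK (Ultrafilter S), A ∈ p := by
  obtain ⟨H, hH⟩ := hA
  obtain ⟨u, hu⟩ := thick_ultrafilter hH
  have hLI : IsLI (univ : Set (Ultrafilter S)) ((· + u) '' univ) :=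
    ⟨⟨u + u, ⟨u, mem_univ u, rfl⟩⟩, subset_univ _, by
      rintro x - _ ⟨r, -, rfl⟩
      exact ⟨x + r, mem_univ _, add_assoc x r u⟩⟩
  have hcl : IsClosed ((· + u) '' univ) :=
    (isCompact_univ.image (Ultrafilter.continuous_add_left u)).isClosed
  obtain ⟨L, hL, hLsub⟩ := exists_minLI_subset hLI hcl
  obtain ⟨q, hq⟩ := hL.1.1
  have hTq : {s' : S | ∃ t ∈ H, t + s' ∈ A} ∈ q := by
    obtain ⟨r, -, hr⟩ := hLsub hq
    rw [← show r + u = q from hr, uf_mem_add]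
    exact Ultrafilter.mem_coe.1 (Filter.univ_mem' fun x => hu x)
  have hsplit : {s' : S | ∃ t ∈ H, t + s' ∈ A} = ⋃ t ∈ (H : Set S), {s' : S | t + s' ∈ A} := by
    ext s'; simp
  rw [hsplit] at hTq
  obtain ⟨t, htH, ht⟩ := (Ultrafilter.finite_biUnion_mem_iff H.finite_toSet).1 hTq
  exact ⟨pure t + q, ⟨L, hL, hL.1.2.2 _ (mem_univ _) _ hq⟩, uf_pure_add.2 ht⟩

lemma pws_of_mem_clK {A : Set S} {p : Ultrafilter S}
    (hp : p ∈ closure (bigK (Ultrafilter S))) (hA : A ∈ p) : PiecewiseSyndetic A := by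
  obtain ⟨q, hq1, hq2⟩ := mem_closure_iff.1 hp {u : Ultrafilter S | A ∈ u}
    (ultrafilter_isOpen_basic A) hA
  exact pws_of_memK hq2 hq1

end PWS

/-! ### van der Waerden: piecewise syndetic sets contain long APs -/

section VDW
variable {S : Type*} [AddCommSemigroup S]

/-- base-point extension of elements of `WithZero S` to `S`. -/
private def tau (s₀ : S) : WithZero S → S :=
  fun m => WithZero.recZeroCoe s₀ (fun s => s + s₀) m

private lemma tau_zero (s₀ : S) : tau s₀ 0 = s₀ := rfl

private lemma tau_coe (s₀ s : S) : tau s₀ (s : WithZero S) = s + s₀ := rfl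

private lemma tau_coe_add (s₀ s : S) (m : WithZero S) :
    tau s₀ ((s : WithZero S) + m) = s + tau s₀ m := by
  induction m with
  | zero => rw [add_zero, tau_coe, tau_zero]
  | coe r => rw [← WithZero.coe_add, tau_coe, tau_coe, add_assoc]

private lemma smul_coe (n : ℕ) (e : S) :
    ((n + 1) • (e : WithZero S)) = ((itAdd n e : S) : WithZero S) := by
  induction n with
  | zero => rw [Nat.zero_add, one_smul]; rfl
  | succ n ih =>
      rw [succ_nsmul, ih, ← WithZero.coe_add, ← itAdd_succ]

lemma pws_contains_ap [Nonempty S] {A : Set S} (hA : PiecewiseSyndetic A) (l : ℕ) :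
    ∃ a b : S, ∀ i : ℕ, i ≤ l → apTerm i (a, b) ∈ A := by
  classical
  obtain ⟨s₀⟩ := (inferInstance : Nonempty S)
  obtain ⟨H, hTh⟩ := hA
  obtain ⟨u, hu⟩ := thick_ultrafilter hTh
  have hHne : H.Nonempty := by
    by_contra hne
    obtain ⟨x, hx⟩ := Ultrafilter.nonempty_of_mem (hu s₀)
    obtain ⟨t, htH, -⟩ := hx
    exact hne ⟨t, htH⟩
  haveI : Nonempty {t : S // t ∈ H} := ⟨⟨hHne.choose, hHne.choose_spec⟩⟩
  -- coloring
  have hcol : ∀ m : WithZero S, ∃ t ∈ H, {x : S | t + tau s₀ m + x ∈ A} ∈ u := by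
    intro m
    have h1 : {y : S | tau s₀ m + y ∈ {s' : S | ∃ t ∈ H, t + s' ∈ A}} ∈ u := hu (tau s₀ m)
    have h2 : (⋃ t ∈ (H : Set S), {y : S | t + tau s₀ m + y ∈ A}) ∈ u := by
      refine umem_mono h1 ?_
      intro y hy
      obtain ⟨t, htH, ht⟩ := hy
      refine mem_iUnion₂.2 ⟨t, htH, ?_⟩
      show t + tau s₀ m + y ∈ A
      rw [add_assoc]
      exact ht
    obtain ⟨t, htH, ht⟩ := (Ultrafilter.finite_biUnion_mem_iff H.finite_toSet).1 h2
    exact ⟨t, htH, ht⟩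
  choose c hcH hc using hcol
  obtain ⟨k, hk, m₀, t, hmono⟩ := Combinatorics.exists_mono_homothetic_copy
    ((Finset.range (l + 1)).image fun j => (j • (s₀ : WithZero S)))
    (fun m => (⟨c m, hcH m⟩ : {t : S // t ∈ H}))
  have hjmem : ∀ j ∈ Finset.range (l + 1),
      {x : S | (t : S) + tau s₀ ((k * j) • (s₀ : WithZero S) + m₀) + x ∈ A} ∈ u := by
    intro j hj
    have h3 := hmono (j • (s₀ : WithZero S))
      (Finset.mem_image_of_mem _ hj)
    have h4 : c ((k * j) • (s₀ : WithZero S) + m₀) = (t : S) := by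
      have : k • (j • (s₀ : WithZero S)) = (k * j) • (s₀ : WithZero S) := smul_smul k j _
      rw [← this]
      exact congrArg Subtype.val h3
    rw [← h4]
    exact hc _
  have hint : (⋂ j ∈ Finset.range (l + 1),
      {x : S | (t : S) + tau s₀ ((k * j) • (s₀ : WithZero S) + m₀) + x ∈ A}) ∈ u :=
    Ultrafilter.mem_coe.1 ((Filter.biInter_finset_mem _).2 fun j hj =>
      Ultrafilter.mem_coe.2 (hjmem j hj))
  obtain ⟨x, hx⟩ := Ultrafilter.nonempty_of_mem hint
  have hmem : ∀ j ≤ l, (t : S) + tau s₀ ((k * j) • (s₀ : WithZero S) + m₀) + x ∈ A :=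
    fun j hj => mem_iInter₂.1 hx j (Finset.mem_range.2 (Nat.lt_succ_of_le hj))
  refine ⟨(t : S) + tau s₀ m₀ + x, itAdd (k - 1) s₀, ?_⟩
  intro i hi
  cases i with
  | zero =>
      have h0 := hmem 0 (Nat.zero_le l)
      rw [Nat.mul_zero, zero_smul, zero_add] at h0
      exact h0
  | succ i =>
      have hil : i + 1 ≤ l := hi
      have h1 := hmem (i + 1) hil
      have hk1 : k * (i + 1) = (k * (i + 1) - 1) + 1 := by
        have : 1 ≤ k * (i + 1) := Nat.one_le_iff_ne_zero.2 (by positivity)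
        omega
      rw [hk1, smul_coe, tau_coe_add] at h1
      show (t : S) + tau s₀ m₀ + x + itAdd i (itAdd (k - 1) s₀) ∈ A
      rw [itAdd_itAdd]
      have hidx : i * (k - 1 + 1) + (k - 1) = k * (i + 1) - 1 := by
        have hk0 : 1 ≤ k := hk
        obtain ⟨k', rfl⟩ := Nat.exists_eq_add_of_le hk0
        have h2 : (1 + k') * (i + 1) = i * (1 + k' - 1 + 1) + (1 + k' - 1) + 1 := by
          have h3 : 1 + k' - 1 = k' := by omega
          rw [h3]; ring
        rw [h2]
        omega
      rw [hidx]
      have hre : (t : S) + tau s₀ m₀ + x + itAdd (k * (i + 1) - 1) s₀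
          = (t : S) + (itAdd (k * (i + 1) - 1) s₀ + tau s₀ m₀) + x := by
        ac_rfl
      rw [hre]
      exact h1

end VDW

/-! ### the key lemma: AP-configuration sets of PWS sets are PWS in `S × S` -/

section KeyLemma
variable {S : Type*} [AddCommSemigroup S]

lemma pws_apSet [Nonempty S] {A : Set S} (hA : PiecewiseSyndetic A) (l : ℕ) :
    PiecewiseSyndetic {x : S × S | ∀ i : ℕ, i ≤ l → apTerm i x ∈ A} := by
  classical
  haveI : Nonempty (S × S) := inferInstance
  -- the minimal ultrafilter containing A
  obtain ⟨w, hwK, hAw⟩ := exists_memK_of_pws hA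
  obtain ⟨L₀, hL₀, hwL₀⟩ := hwK
  -- continuity facts
  have hcS : ∀ r : Ultrafilter S, Continuous (· + r : Ultrafilter S → Ultrafilter S) :=
    fun r => Ultrafilter.continuous_add_left r
  have hcY : ∀ r : Fin (l + 1) → Ultrafilter S,
      Continuous (· + r : (Fin (l + 1) → Ultrafilter S) → (Fin (l + 1) → Ultrafilter S)) := by
    intro r
    exact continuous_pi fun i =>
      (Ultrafilter.continuous_add_left (r i)).comp (continuous_apply i)
  have hcT : ∀ r : Ultrafilter (S × S), Continuous (· + r) :=
    fun r => Ultrafilter.continuous_add_left r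
  -- the homomorphism
  set htil : Ultrafilter (S × S) → (Fin (l + 1) → Ultrafilter S) :=
    fun q i => Ultrafilter.map (fun x : S × S => apTerm i.1 x) q with hhtil
  have hcont : Continuous htil := continuous_pi fun i => continuous_uf_map _
  have hhom : ∀ q r : Ultrafilter (S × S), htil (q + r) = htil q + htil r := by
    intro q r
    funext i
    exact uf_map_add _ (fun a b => apTerm_add i.1 a b) q r
  set E : Set (Fin (l + 1) → Ultrafilter S) := range htil with hE
  have hEc : IsClosed E := (isCompact_range hcont).isClosed
  have hEne : E.Nonempty := range_nonempty _
  have hEadd : ∀ x ∈ E, ∀ y ∈ E, x + y ∈ E := by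
    rintro _ ⟨q, rfl⟩ _ ⟨r, rfl⟩
    exact ⟨q + r, hhom q r⟩
  -- the diagonal point
  set Δ : Fin (l + 1) → Ultrafilter S := fun _ => w with hΔ
  have hΔLY : Δ ∈ {y : Fin (l + 1) → Ultrafilter S | ∀ i, y i ∈ L₀} := fun i => hwL₀
  have hLY : IsMinLI (univ : Set (Fin (l + 1) → Ultrafilter S))
      {y | ∀ i, y i ∈ L₀} := isMinLI_pi hcS hL₀
  -- Δ belongs to E
  have hΔE : Δ ∈ E := by
    have hclos : Δ ∈ closure (range fun ab : S × S => htil (pure ab)) := by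
      rw [mem_closure_iff]
      intro o ho hΔo
      obtain ⟨I, U, hIU, hsub⟩ := isOpen_pi_iff.1 ho Δ hΔo
      have hBex : ∀ i ∈ I, ∃ B : Set S, B ∈ w ∧ {v : Ultrafilter S | B ∈ v} ⊆ U i := by
        intro i hi
        obtain ⟨tset, ⟨B, rfl⟩, hwB, hBsub⟩ :=
          ultrafilterBasis_is_basis.exists_subset_of_mem_open (hIU i hi).2 (hIU i hi).1
        exact ⟨B, hwB, hBsub⟩
      choose! B hBw hBsub using hBex
      have hA'w : ((⋂ i ∈ I, B i) ∩ A) ∈ w :=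
        Ultrafilter.mem_coe.1 (Filter.inter_mem
          ((Filter.biInter_finset_mem _).2 fun i hi => Ultrafilter.mem_coe.2 (hBw i hi))
          (Ultrafilter.mem_coe.2 hAw))
      have hA'pws : PiecewiseSyndetic ((⋂ i ∈ I, B i) ∩ A) :=
        pws_of_memK ⟨L₀, hL₀, hwL₀⟩ hA'w
      obtain ⟨a, b, hab⟩ := pws_contains_ap hA'pws l
      refine ⟨htil (pure (a, b)), hsub ?_, mem_range_self _⟩
      intro i hi
      have hmp : htil (pure (a, b)) i = pure (apTerm i.1 (a, b)) :=
        Ultrafilter.map_pure _ _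
      refine hBsub i hi ?_
      rw [hmp]
      have := hab i.1 (Nat.lt_succ_iff.1 i.isLt)
      exact (mem_iInter₂.1 this.1 i hi : apTerm i.1 (a, b) ∈ B i)
    refine closure_minimal ?_ hEc hclos
    rintro _ ⟨ab, rfl⟩
    exact mem_range_self _
  -- Δ is in a minimal left ideal of E
  have hΔLY' : Δ ∈ {y : Fin (l + 1) → Ultrafilter S | ∀ i, y i ∈ L₀} := hΔLY
  obtain ⟨LE, hLE, hΔLE⟩ := mem_minLI_of_global hcY hEadd hEc hLY hΔLY' hΔE
  -- the image of bigK is a two-sided ideal of E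
  have hKT : (bigK (Ultrafilter (S × S))).Nonempty := bigK_nonempty
  have hIne : (htil '' bigK (Ultrafilter (S × S))).Nonempty := hKT.image _
  have hIsub : htil '' bigK (Ultrafilter (S × S)) ⊆ E := image_subset_range _ _
  have hIl : ∀ x ∈ E, ∀ y ∈ htil '' bigK (Ultrafilter (S × S)),
      x + y ∈ htil '' bigK (Ultrafilter (S × S)) := by
    rintro _ ⟨q, rfl⟩ _ ⟨k, hk, rfl⟩
    exact ⟨q + k, bigK_add_left hk q, hhom q k⟩
  have hIr : ∀ y ∈ htil '' bigK (Ultrafilter (S × S)), ∀ x ∈ E,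
      y + x ∈ htil '' bigK (Ultrafilter (S × S)) := by
    rintro _ ⟨k, hk, rfl⟩ _ ⟨q, rfl⟩
    exact ⟨k + q, bigK_add_right hcT hk q, hhom k q⟩
  have hΔI : Δ ∈ htil '' bigK (Ultrafilter (S × S)) :=
    minLI_subset_ideal hcY hEadd hEc hLE hIsub hIl hIr hIne hΔLE
  obtain ⟨q₂, hq₂K, hq₂⟩ := hΔI
  -- conclude
  have hpre : ∀ i : Fin (l + 1), (fun x : S × S => apTerm i.1 x) ⁻¹' A ∈ q₂ := by
    intro i
    have : Ultrafilter.map (fun x : S × S => apTerm i.1 x) q₂ = w := congrFun hq₂ i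
    rw [← this] at hAw
    exact Ultrafilter.mem_map.1 hAw
  have hset : {x : S × S | ∀ i : ℕ, i ≤ l → apTerm i x ∈ A}
      = ⋂ i : Fin (l + 1), (fun x : S × S => apTerm i.1 x) ⁻¹' A := by
    ext x
    simp only [mem_setOf_eq, mem_iInter, mem_preimage]
    constructor
    · intro h i
      exact h i.1 (Nat.lt_succ_iff.1 i.isLt)
    · intro h i hi
      exact h ⟨i, Nat.lt_succ_of_le hi⟩
  have hmem : {x : S × S | ∀ i : ℕ, i ≤ l → apTerm i x ∈ A} ∈ q₂ := by
    rw [hset]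
    exact Ultrafilter.mem_coe.1 (Filter.iInter_mem.2 fun i =>
      Ultrafilter.mem_coe.2 (hpre i))
  exact pws_of_memK hq₂K hmem

end KeyLemma

/-! ### from an idempotent in the closure of bigK to a quasi-central chain -/

section Chain
variable {T : Type*} [AddCommSemigroup T]

lemma quasiCentral_of_idem [Countable T] [Nonempty T]
    {q : Ultrafilter T} (hq : q + q = q)
    (hqK : q ∈ closure (bigK (Ultrafilter T)))
    {N : Set T} (hN : N ∈ q) : QuasiCentral N := by
  classical
  obtain ⟨e, he⟩ := exists_surjective_nat T
  set st : Set T → Set T := fun B => B ∩ {x | {y | x + y ∈ B} ∈ q} with hst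
  have hst_mem : ∀ B ∈ q, st B ∈ q := by
    intro B hB
    have hB2 : B ∈ q + q := by rw [hq]; exact hB
    have h2 : {x | {y | x + y ∈ B} ∈ q} ∈ q := uf_mem_add.1 hB2
    exact Ultrafilter.mem_coe.1
      (Filter.inter_mem (Ultrafilter.mem_coe.2 hB) (Ultrafilter.mem_coe.2 h2))
  have hst_sub : ∀ B, st B ⊆ B := fun B => inter_subset_left
  have hst_shift : ∀ B ∈ q, ∀ x ∈ st B, {y | x + y ∈ st B} ∈ q := by
    intro B hB x hx
    obtain ⟨hxB, hxs⟩ := hx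
    have h1 : st {y | x + y ∈ B} ∈ q := hst_mem _ hxs
    refine umem_mono h1 ?_
    rintro y ⟨hy1, hy2⟩
    refine ⟨hy1, ?_⟩
    refine umem_mono hy2 ?_
    intro z hz
    show (x + y) + z ∈ B
    rw [add_assoc]
    exact hz
  -- conditional translate set
  set Bjk : ℕ → ℕ → Set T → Set T :=
    fun j _ P => if e j ∈ P then {y | e j + y ∈ P} else univ with hBjk
  -- history-carrying recursion
  set F : ℕ → ℕ → Set T := fun n => Nat.rec (fun _ => st N)
    (fun n Fn => fun m => if m ≤ n then Fn m else
      st (Fn n ∩ ⋂ j ∈ Finset.range (n + 1), ⋂ k ∈ Finset.range (n + 1), Bjk j k (Fn k))) n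
    with hFdef
  set C : ℕ → Set T := fun n => F n n with hC
  have hFsucc : ∀ n m, F (n + 1) m = if m ≤ n then F n m else
      st (F n n ∩ ⋂ j ∈ Finset.range (n + 1), ⋂ k ∈ Finset.range (n + 1), Bjk j k (F n k)) :=
    fun n m => rfl
  have hcons : ∀ n m, m ≤ n → F n m = C m := by
    intro n
    induction n with
    | zero => intro m hm; interval_cases m; rfl
    | succ n ih =>
        intro m hm
        rcases Nat.lt_or_ge m (n + 1) with h | h
        · rw [hFsucc n m, if_pos (Nat.lt_succ_iff.1 h)]
          exact ih m (Nat.lt_succ_iff.1 h)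
        · have : m = n + 1 := le_antisymm hm h
          subst this
          rfl
  have hCsucc : ∀ n, C (n + 1) = st (C n ∩ ⋂ j ∈ Finset.range (n + 1),
      ⋂ k ∈ Finset.range (n + 1), Bjk j k (C k)) := by
    intro n
    show F (n + 1) (n + 1) = _
    rw [hFsucc n (n + 1), if_neg (by omega)]
    have hD : (⋂ j ∈ Finset.range (n + 1), ⋂ k ∈ Finset.range (n + 1), Bjk j k (F n k))
        = ⋂ j ∈ Finset.range (n + 1), ⋂ k ∈ Finset.range (n + 1), Bjk j k (C k) := by
      refine Set.iInter₂_congr fun j hj => ?_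
      refine Set.iInter₂_congr fun k hk => ?_
      rw [hcons n k (Nat.lt_succ_iff.1 (Finset.mem_range.1 hk))]
    rw [hcons n n le_rfl, hD]
  -- the invariant
  have hInv : ∀ n, C n ∈ q ∧ ∀ x ∈ C n, {y | x + y ∈ C n} ∈ q := by
    intro n
    induction n using Nat.strong_induction_on with
    | _ n ih =>
        match n with
        | 0 =>
            constructor
            · exact hst_mem N hN
            · intro x hx
              exact hst_shift N hN x hx
        | Nat.succ n =>
            have hD : (C n ∩ ⋂ j ∈ Finset.range (n + 1),
                ⋂ k ∈ Finset.range (n + 1), Bjk j k (C k)) ∈ q := by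
              refine Ultrafilter.mem_coe.1 (Filter.inter_mem
                (Ultrafilter.mem_coe.2 (ih n (Nat.lt_succ_self n)).1) ?_)
              refine (Filter.biInter_finset_mem _).2 fun j hj => ?_
              refine (Filter.biInter_finset_mem _).2 fun k hk => ?_
              have hkn : k < n + 1 := Finset.mem_range.1 hk
              by_cases hjk : e j ∈ C k
              · have := (ih k hkn).2 (e j) hjk
                simpa only [hBjk, if_pos hjk] using (Ultrafilter.mem_coe.2 this)
              · simp only [hBjk, if_neg hjk]
                exact Filter.univ_mem
            rw [hCsucc n]
            exact ⟨hst_mem _ hD, fun x hx => hst_shift _ hD x hx⟩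
  -- decreasing
  have hdec : ∀ n, C (n + 1) ⊆ C n := by
    intro n
    rw [hCsucc n]
    exact (hst_sub _).trans inter_subset_left
  have hsubN : ∀ n, C n ⊆ N := by
    intro n
    induction n with
    | zero => exact hst_sub N
    | succ n ih => exact (hdec n).trans ih
  refine ⟨C, hsubN, hdec, ?_, ?_⟩
  · intro n
    exact pws_of_mem_clK hqK (hInv n).1
  · intro n x hx
    obtain ⟨j, rfl⟩ := he x
    refine ⟨max j n + 1, ?_⟩
    rw [hCsucc (max j n)]
    refine (hst_sub _).trans ?_
    refine inter_subset_right.trans ?_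
    refine (Set.biInter_subset_of_mem
      (Finset.mem_range.2 (Nat.lt_succ_of_le (le_max_left j n)))).trans ?_
    refine (Set.biInter_subset_of_mem
      (Finset.mem_range.2 (Nat.lt_succ_of_le (le_max_right j n)))).trans ?_
    have : Bjk j n (C n) = {y | e j + y ∈ C n} := by
      rw [hBjk]
      simp only [if_pos hx]
    rw [this]

end Chain

/-! ### from a quasi-central chain to an idempotent in the closure of bigK -/

section Chain2
variable {S : Type*} [AddCommSemigroup S]

lemma exists_idem_clK_of_chain [Nonempty S] {M : Set S} (hM : QuasiCentral M) :
    ∃ p : Ultrafilter S, p + p = p ∧ p ∈ closure (bigK (Ultrafilter S)) ∧ M ∈ p := by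
  obtain ⟨C, hCM, hCdec, hCpws, hCshift⟩ := hM
  set W : ℕ → Set (Ultrafilter S) :=
    fun n => closure (bigK (Ultrafilter S)) ∩ {p | C n ∈ p} with hW
  have hWne : ∀ n, (W n).Nonempty := by
    intro n
    obtain ⟨p, hpK, hp⟩ := exists_memK_of_pws (hCpws n)
    exact ⟨p, subset_closure hpK, hp⟩
  have hWclosed : ∀ n, IsClosed (W n) :=
    fun n => isClosed_closure.inter (ultrafilter_isClosed_basic _)
  have hCanti : ∀ m n, m ≤ n → C n ⊆ C m := by
    intro m n h
    induction h with
    | refl => exact subset_rfl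
    | step h ih => exact (hCdec _).trans ih
  have hWmono : ∀ m n, m ≤ n → W n ⊆ W m := by
    intro m n h p hp
    exact ⟨hp.1, umem_mono hp.2 (hCanti m n h)⟩
  have hWdir : Directed (· ⊇ ·) W := fun m n =>
    ⟨max m n, hWmono m _ (le_max_left m n), hWmono n _ (le_max_right m n)⟩
  obtain ⟨p₀, hp₀⟩ := IsCompact.nonempty_iInter_of_directed_nonempty_isCompact_isClosed
    W hWdir hWne (fun n => (hWclosed n).isCompact) hWclosed
  set Y₀ : Set (Ultrafilter S) := ⋂ n, W n with hY₀
  have hY₀c : IsClosed Y₀ := isClosed_iInter hWclosed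
  have hY₀add : ∀ p ∈ Y₀, ∀ r ∈ Y₀, p + r ∈ Y₀ := by
    intro p hp r hr
    refine mem_iInter.2 fun n => ⟨clK_add_left (mem_iInter.1 hr n).1 p, ?_⟩
    show C n ∈ p + r
    rw [uf_mem_add]
    refine umem_mono (mem_iInter.1 hp n).2 ?_
    intro x hx
    obtain ⟨m, hm⟩ := hCshift n x hx
    exact umem_mono (mem_iInter.1 hr m).2 hm
  obtain ⟨p, hpY₀, hpp⟩ := exists_idempotent_in_compact_add_subsemigroup
    (fun r : Ultrafilter S => Ultrafilter.continuous_add_left r) Y₀ ⟨p₀, hp₀⟩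
    hY₀c.isCompact hY₀add
  exact ⟨p, hpp, (mem_iInter.1 hpY₀ 0).1, umem_mono (mem_iInter.1 hpY₀ 0).2 (hCM 0)⟩

end Chain2

end QC13

theorem stmt_13 {S : Type*} [AddCommSemigroup S] [Countable S]
    (hS : ∀ d : ℕ, 0 < d → PiecewiseSyndetic {x : S | ∃ s : S, x = itAdd (d - 1) s})
    (M : Set S) (hM : QuasiCentral M) (l : ℕ) :
    QuasiCentral
      {p : S × S | p.1 ∈ M ∧ ∀ i < l, p.1 + itAdd i p.2 ∈ M} := by
  classical
  have hne : Nonempty S := by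
    obtain ⟨C, -, -, hCpws, -⟩ := hM
    obtain ⟨F0, hF0⟩ := hCpws 0
    obtain ⟨x0, -⟩ := hF0 ∅
    exact ⟨x0⟩
  haveI := hne
  obtain ⟨p, hpp, hpK, hMp⟩ := QC13.exists_idem_clK_of_chain hM
  set σ : Fin (l + 1) → S × S → S := fun i x => QC13.apTerm i.1 x with hσ
  haveI : Nonempty {A : Set S // A ∈ p} := ⟨⟨Set.univ, Ultrafilter.mem_coe.1 Filter.univ_mem⟩⟩
  set W : {A : Set S // A ∈ p} → Set (Ultrafilter (S × S)) := fun A =>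
    closure (QC13.bigK (Ultrafilter (S × S))) ∩
      ⋂ i : Fin (l + 1), {q : Ultrafilter (S × S) | σ i ⁻¹' A.1 ∈ q} with hWdef
  have hWne : ∀ A, (W A).Nonempty := by
    intro A
    have hApws : PiecewiseSyndetic A.1 := QC13.pws_of_mem_clK hpK A.2
    obtain ⟨q, hqK, hq⟩ := QC13.exists_memK_of_pws (QC13.pws_apSet hApws l)
    refine ⟨q, subset_closure hqK, Set.mem_iInter.2 fun i => QC13.umem_mono hq ?_⟩
    intro x hx
    exact hx i.1 (Nat.lt_succ_iff.1 i.isLt)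
  have hWc : ∀ A, IsClosed (W A) := fun A =>
    isClosed_closure.inter (isClosed_iInter fun i => ultrafilter_isClosed_basic _)
  have hWdir : Directed (· ⊇ ·) W := by
    intro A B
    have hABp : A.1 ∩ B.1 ∈ p := Ultrafilter.mem_coe.1
      (Filter.inter_mem (Ultrafilter.mem_coe.2 A.2) (Ultrafilter.mem_coe.2 B.2))
    refine ⟨⟨A.1 ∩ B.1, hABp⟩, ?_, ?_⟩
    · intro q hq
      refine ⟨hq.1, Set.mem_iInter.2 fun i => ?_⟩
      exact QC13.umem_mono (Set.mem_iInter.1 hq.2 i)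
        (Set.preimage_mono Set.inter_subset_left)
    · intro q hq
      refine ⟨hq.1, Set.mem_iInter.2 fun i => ?_⟩
      exact QC13.umem_mono (Set.mem_iInter.1 hq.2 i)
        (Set.preimage_mono Set.inter_subset_right)
  obtain ⟨q₁, hq₁⟩ := IsCompact.nonempty_iInter_of_directed_nonempty_isCompact_isClosed
    W hWdir hWne (fun A => (hWc A).isCompact) hWc
  have hmapeq : ∀ i, Ultrafilter.map (σ i) q₁ = p := by
    intro i
    have hle : (↑(Ultrafilter.map (σ i) q₁) : Filter S) ≤ ↑p := by
      intro A hA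
      have hAp : A ∈ p := Ultrafilter.mem_coe.1 hA
      have h1 := (Set.mem_iInter.1 hq₁ ⟨A, hAp⟩).2
      have h2 : σ i ⁻¹' A ∈ q₁ := Set.mem_iInter.1 h1 i
      exact Ultrafilter.mem_coe.2 (Ultrafilter.mem_map.2 h2)
    exact Ultrafilter.coe_injective (p.unique hle)
  set Z : Set (Ultrafilter (S × S)) := closure (QC13.bigK (Ultrafilter (S × S))) ∩
    {q : Ultrafilter (S × S) | ∀ i, Ultrafilter.map (σ i) q = p} with hZ
  have hZne : Z.Nonempty := ⟨q₁,
    (Set.mem_iInter.1 hq₁ ⟨Set.univ, Ultrafilter.mem_coe.1 Filter.univ_mem⟩).1,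
    fun i => hmapeq i⟩
  have hZc : IsClosed Z := by
    refine isClosed_closure.inter ?_
    have : {q : Ultrafilter (S × S) | ∀ i, Ultrafilter.map (σ i) q = p}
        = ⋂ i, (Ultrafilter.map (σ i)) ⁻¹' {p} := by
      ext q; simp
    rw [this]
    exact isClosed_iInter fun i => isClosed_singleton.preimage (QC13.continuous_uf_map _)
  have hZadd : ∀ a ∈ Z, ∀ b ∈ Z, a + b ∈ Z := by
    intro a ha b hb
    refine ⟨QC13.clK_add_left hb.1 a, fun i => ?_⟩
    rw [QC13.uf_map_add (σ i) (fun x y => QC13.apTerm_add i.1 x y) a b,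
      ha.2 i, hb.2 i, hpp]
  obtain ⟨qs, hqsZ, hqsIdem⟩ := exists_idempotent_in_compact_add_subsemigroup
    (fun r : Ultrafilter (S × S) => Ultrafilter.continuous_add_left r) Z hZne
    hZc.isCompact hZadd
  have htar : {x : S × S | x.1 ∈ M ∧ ∀ i < l, x.1 + itAdd i x.2 ∈ M}
      = ⋂ i : Fin (l + 1), σ i ⁻¹' M := by
    ext x
    simp only [Set.mem_setOf_eq, Set.mem_iInter, Set.mem_preimage]
    constructor
    · rintro ⟨h0, h1⟩ ⟨iv, hiv⟩
      match iv, hiv with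
      | 0, _ => exact h0
      | Nat.succ j, hj => exact h1 j (by omega)
    · intro h
      exact ⟨h ⟨0, by omega⟩, fun j hj => h ⟨j + 1, by omega⟩⟩
  have hmem : {x : S × S | x.1 ∈ M ∧ ∀ i < l, x.1 + itAdd i x.2 ∈ M} ∈ qs := by
    rw [htar]
    refine Ultrafilter.mem_coe.1 (Filter.iInter_mem.2 fun i => Ultrafilter.mem_coe.2 ?_)
    refine Ultrafilter.mem_map.1 ?_
    rw [hqsZ.2 i]
    exact hMp
  exact QC13.quasiCentral_of_idem hqsIdem hqsZ.1 hmem
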